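/- For all real t > 0, M > 0 and all x, y ∈ ℝ, both of the following series converge absolutely and Σ_{n=1}^∞ (2/M) · cos( (n − 1/2)·π·x / M ) · cos( (n − 1/2)·π·y / M ) · e^{ −(n − 1/2)² π² t / (2M²) } = Σ_{n∈ℤ} ( (−1)^n / √(2πt) ) · ( e^{ −(y − x − 2nM)² / (2t) } + e^{ −(y + x + 2nM)² / (2t) } ). -/

import Mathlib

open Real

/-- General Gaussian summability over ℤ. -/
lemma gauss_int_summable' {a : ℝ} (ha : 0 < a) (b : ℝ) :
    Summable fun n : ℤ => Real.exp (-a * (n : ℝ) ^ 2 + b * |(n : ℝ)|) := by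
  have h := summable_pow_mul_jacobiTheta₂_term_bound (|b| / (2 * π)) (T := a / π)
    (div_pos ha pi_pos) 0
  refine h.of_nonneg_of_le (fun n => (Real.exp_pos _).le) (fun n => ?_)
  rw [pow_zero, one_mul]
  apply Real.exp_le_exp.2
  have hπ := Real.pi_pos
  push_cast
  have h1 : b * |(n:ℝ)| ≤ |b| * |(n:ℝ)| :=
    mul_le_mul_of_nonneg_right (le_abs_self b) (abs_nonneg _)
  have h2 : -π * (a / π * (n:ℝ) ^ 2 - 2 * (|b| / (2 * π)) * |(n:ℝ)|)
      = -a * (n:ℝ)^2 + |b| * |(n:ℝ)| := by field_simp; ring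
  linarith [h2.ge]

lemma half_gauss_summable {c : ℝ} (hc : 0 < c) :
    Summable fun n : ℤ => Real.exp (-c * ((n:ℝ) + 1/2) ^ 2) := by
  refine (gauss_int_summable' hc c).of_nonneg_of_le (fun n => (Real.exp_pos _).le)
    (fun n => Real.exp_le_exp.2 ?_)
  have h1 : -c * (n:ℝ) ≤ c * |(n:ℝ)| := by
    have := neg_abs_le (n:ℝ)
    nlinarith [abs_nonneg (n:ℝ)]
  nlinarith [sq_nonneg ((n:ℝ)), hc.le]

lemma shifted_gauss_summable {t M : ℝ} (ht : 0 < t) (hM : 0 < M) (u : ℝ) :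
    Summable fun n : ℤ => Real.exp (-(u - 2*(n:ℝ)*M)^2/(2*t)) := by
  refine (gauss_int_summable' (a := 2*M^2/t) (by positivity) (2 * |u| * M / t)).of_nonneg_of_le
    (fun n => (Real.exp_pos _).le) (fun n => Real.exp_le_exp.2 ?_)
  have h1 : u * (n:ℝ) ≤ |u| * |(n:ℝ)| := (le_abs_self _).trans_eq (abs_mul u (n:ℝ))
  rw [show -(u - 2*(n:ℝ)*M)^2/(2*t) = (-(u - 2*(n:ℝ)*M)^2/2)/t by ring,
    show -(2*M^2/t) * (n:ℝ)^2 + 2 * |u| * M / t * |(n:ℝ)|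
      = (-(2*M^2)*(n:ℝ)^2 + 2 * |u| * M * |(n:ℝ)|)/t by ring,
    div_le_div_iff_of_pos_right ht]
  nlinarith [sq_nonneg u, abs_nonneg u, abs_nonneg ((n:ℝ))]


lemma complex_key (t M : ℝ) (ht : 0 < t) (hM : 0 < M) (u : ℝ) :
    (∑' n : ℤ, Complex.exp (((-(π^2*t/(2*M^2)) * ((n:ℝ)+1/2)^2 : ℝ) : ℂ)
        + ((π*u/M*((n:ℝ)+1/2) : ℝ) : ℂ) * Complex.I))
      = ((2*M/Real.sqrt (2*π*t) * ∑' n : ℤ,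
          ((-1:ℝ)^n * Real.exp (-(u-2*(n:ℝ)*M)^2/(2*t))) : ℝ) : ℂ) := by
  have hπ := Real.pi_pos
  have hM' : (M:ℂ) ≠ 0 := Complex.ofReal_ne_zero.2 hM.ne'
  have ht' : (t:ℂ) ≠ 0 := Complex.ofReal_ne_zero.2 ht.ne'
  have hπ' : (π:ℂ) ≠ 0 := Complex.ofReal_ne_zero.2 hπ.ne'
  set A : ℝ := π*t/(2*M^2) with hA_def
  have hA : 0 < A := by positivity
  have hA' : (A:ℂ) ≠ 0 := Complex.ofReal_ne_zero.2 hA.ne'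
  set b : ℂ := (-((π^2*t/(2*M^2) : ℝ) : ℂ) + ((π*u/M : ℝ) : ℂ) * Complex.I) / (2*(π:ℂ)) with hb_def
  set E : ℂ := Complex.exp (-((π^2*t/(2*M^2) : ℝ) : ℂ)/4 + ((π*u/M : ℝ) : ℂ)/2 * Complex.I)
    with hE_def
  have h := Complex.tsum_exp_neg_quadratic (a := (A:ℂ))
    (by rw [Complex.ofReal_re]; exact hA) b
  have hcoef : (1:ℂ) / (A:ℂ) ^ (1/2 : ℂ) = ((2*M/Real.sqrt (2*π*t) : ℝ) : ℂ) := by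
    have h1 : ((A:ℂ)) ^ (1/2 : ℂ) = ((Real.sqrt A : ℝ) : ℂ) := by
      rw [Real.sqrt_eq_rpow, Complex.ofReal_cpow hA.le]
      norm_num
    rw [h1, ← Complex.ofReal_one, ← Complex.ofReal_div]
    congr 1
    have hsq : Real.sqrt A = Real.sqrt (2*π*t) / (2*M) := by
      rw [show A = (Real.sqrt (2*π*t) / (2*M))^2 by
        rw [div_pow, Real.sq_sqrt (by positivity)]; rw [hA_def]; ring]
      exact Real.sqrt_sq (by positivity)
    rw [hsq]
    have h2 : Real.sqrt (2*π*t) ≠ 0 := by positivity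
    field_simp
  -- key sub-identities
  have hIb : Complex.I * b = ((-(u/(2*M)) : ℝ) : ℂ) + ((-(π*t/(4*M^2)) : ℝ) : ℂ) * Complex.I := by
    rw [hb_def, mul_div_assoc', div_eq_iff (by simpa using hπ' : (2*(π:ℂ)) ≠ 0)]
    have hcc : ((π^2*t/(2*M^2) : ℝ) : ℂ) = -(2*(π:ℂ)*((-(π*t/(4*M^2)) : ℝ):ℂ)) := by
      push_cast
      rw [← sub_eq_zero]
      field_simp
      ring
    have hcd : ((π*u/M : ℝ) : ℂ) = -(2*(π:ℂ)*((-(u/(2*M)) : ℝ):ℂ)) := by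
      push_cast
      rw [← sub_eq_zero]
      field_simp
      ring
    linear_combination (-Complex.I) * hcc + Complex.I^2 * hcd
      + (-2*(π:ℂ)*((-(u/(2*M)) : ℝ):ℂ)) * Complex.I_sq
  have hq : -(π:ℂ)/(A:ℂ) = ((-(2*M^2/t) : ℝ) : ℂ) := by
    have hr : -(π/A) = -(2*M^2/t) := by
      rw [hA_def]; rw [neg_inj]; field_simp
    calc -(π:ℂ)/(A:ℂ) = ((-(π/A) : ℝ) : ℂ) := by push_cast; ring
      _ = ((-(2*M^2/t) : ℝ) : ℂ) := by rw [hr]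
  calc (∑' n : ℤ, Complex.exp (((-(π^2*t/(2*M^2)) * ((n:ℝ)+1/2)^2 : ℝ) : ℂ)
          + ((π*u/M*((n:ℝ)+1/2) : ℝ) : ℂ) * Complex.I))
      = ∑' n : ℤ, E * Complex.exp (-(π:ℂ) * (A:ℂ) * (n:ℂ)^2 + 2*(π:ℂ)*b*(n:ℂ)) := by
        refine tsum_congr fun n => ?_
        rw [hE_def, ← Complex.exp_add]
        congr 1
        rw [hb_def, hA_def]
        push_cast
        rw [← sub_eq_zero]
        ring_nf
        rw [← sub_eq_zero]
        field_simp
        ring_nf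
        try ring
    _ = E * ∑' n : ℤ, Complex.exp (-(π:ℂ) * (A:ℂ) * (n:ℂ)^2 + 2*(π:ℂ)*b*(n:ℂ)) := tsum_mul_left
    _ = E * (1 / (A:ℂ) ^ (1/2:ℂ)
          * ∑' n : ℤ, Complex.exp (-(π:ℂ)/(A:ℂ) * ((n:ℂ) + Complex.I*b)^2)) := by rw [h]
    _ = 1 / (A:ℂ) ^ (1/2:ℂ)
          * ∑' n : ℤ, E * Complex.exp (-(π:ℂ)/(A:ℂ) * ((n:ℂ) + Complex.I*b)^2) := by
        rw [tsum_mul_left]; ring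
    _ = 1 / (A:ℂ) ^ (1/2:ℂ)
          * ∑' n : ℤ, (((-1:ℝ)^n * Real.exp (-(u-2*(n:ℝ)*M)^2/(2*t)) : ℝ) : ℂ) := by
        refine congrArg _ (tsum_congr fun n => ?_)
        have e1 : E * Complex.exp (-(π:ℂ)/(A:ℂ) * ((n:ℂ) + Complex.I*b)^2)
            = Complex.exp ((n:ℂ) * ((π:ℂ)*Complex.I))
              * Complex.exp (((-(u-2*(n:ℝ)*M)^2/(2*t) : ℝ) : ℂ)) := by
          rw [hE_def, ← Complex.exp_add, ← Complex.exp_add]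
          congr 1
          rw [hq, hIb]
          have hX : -(π^2*t/(2*M^2))/4
              + (-(2*M^2/t))*((((n:ℝ) + (-(u/(2*M))))^2 - (-(π*t/(4*M^2)))^2))
              = -(u-2*(n:ℝ)*M)^2/(2*t) := by
            rw [← sub_eq_zero]; ring_nf; rw [← sub_eq_zero]; field_simp; ring_nf
          have hY : π*u/M/2 + (-(2*M^2/t))*(2*((n:ℝ) + (-(u/(2*M))))*(-(π*t/(4*M^2))))
              = (n:ℝ)*π := by
            rw [← sub_eq_zero]; ring_nf; rw [← sub_eq_zero]; field_simp; ring_nf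
          have hXc := congrArg (fun r : ℝ => (r : ℂ)) hX
          have hYc := congrArg (fun r : ℝ => (r : ℂ)) hY
          linear_combination (norm := (push_cast; ring1)) hXc + Complex.I * hYc
            + (((-(2*M^2/t) : ℝ):ℂ) * ((-(π*t/(4*M^2)) : ℝ):ℂ)^2) * Complex.I_sq
        rw [e1, Complex.exp_int_mul, Complex.exp_pi_mul_I, Complex.ofReal_mul,
          Complex.ofReal_exp, Complex.ofReal_zpow]
        push_cast
        ring
    _ = ((2*M/Real.sqrt (2*π*t) * ∑' n : ℤ,
          ((-1:ℝ)^n * Real.exp (-(u-2*(n:ℝ)*M)^2/(2*t))) : ℝ) : ℂ) := by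
        rw [hcoef, Complex.ofReal_mul, Complex.ofReal_tsum]




lemma real_key (t M : ℝ) (ht : 0 < t) (hM : 0 < M) (u : ℝ) :
    (∑' n : ℤ, Real.exp (-(π^2*t/(2*M^2)) * ((n:ℝ)+1/2)^2) * Real.cos (π*u/M*((n:ℝ)+1/2)))
      = 2*M/Real.sqrt (2*π*t) * ∑' n : ℤ, ((-1:ℝ)^n * Real.exp (-(u-2*(n:ℝ)*M)^2/(2*t))) := by
  have hπ := Real.pi_pos
  have hc : 0 < π^2*t/(2*M^2) := by positivity
  have hsum : Summable fun n : ℤ =>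
      Complex.exp (((-(π^2*t/(2*M^2)) * ((n:ℝ)+1/2)^2 : ℝ) : ℂ)
        + ((π*u/M*((n:ℝ)+1/2) : ℝ) : ℂ) * Complex.I) := by
    apply Summable.of_norm
    refine (half_gauss_summable hc).congr fun n => ?_
    rw [Complex.norm_exp,
      show (((-(π^2*t/(2*M^2)) * ((n:ℝ)+1/2)^2 : ℝ) : ℂ)
        + ((π*u/M*((n:ℝ)+1/2) : ℝ) : ℂ) * Complex.I).re
        = -(π^2*t/(2*M^2)) * ((n:ℝ)+1/2)^2 from by
        simp only [Complex.add_re, Complex.ofReal_re, Complex.mul_I_re, Complex.ofReal_im,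
          neg_zero, add_zero]]
  have h := congrArg Complex.re (complex_key t M ht hM u)
  rw [Complex.ofReal_re, Complex.re_tsum hsum] at h
  rw [← h]
  refine tsum_congr fun n => ?_
  rw [Complex.exp_add, ← Complex.ofReal_exp, Complex.re_ofReal_mul,
    Complex.exp_ofReal_mul_I_re]





theorem stmt_11 (t M : ℝ) (ht : 0 < t) (hM : 0 < M) (x y : ℝ) :
    (Summable fun n : ℕ =>
      |(2 / M) * Real.cos (((n : ℝ) + 1 - 1 / 2) * Real.pi * x / M) *
        Real.cos (((n : ℝ) + 1 - 1 / 2) * Real.pi * y / M) *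
        Real.exp (-((n : ℝ) + 1 - 1 / 2) ^ 2 * Real.pi ^ 2 * t / (2 * M ^ 2))|) ∧
    (Summable fun n : ℤ =>
      |((-1 : ℝ) ^ n / Real.sqrt (2 * Real.pi * t)) *
        (Real.exp (-(y - x - 2 * (n : ℝ) * M) ^ 2 / (2 * t)) +
          Real.exp (-(y + x + 2 * (n : ℝ) * M) ^ 2 / (2 * t)))|) ∧
    (∑' n : ℕ, (2 / M) * Real.cos (((n : ℝ) + 1 - 1 / 2) * Real.pi * x / M) *
        Real.cos (((n : ℝ) + 1 - 1 / 2) * Real.pi * y / M) *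
        Real.exp (-((n : ℝ) + 1 - 1 / 2) ^ 2 * Real.pi ^ 2 * t / (2 * M ^ 2)))
      = ∑' n : ℤ, ((-1 : ℝ) ^ n / Real.sqrt (2 * Real.pi * t)) *
          (Real.exp (-(y - x - 2 * (n : ℝ) * M) ^ 2 / (2 * t)) +
            Real.exp (-(y + x + 2 * (n : ℝ) * M) ^ 2 / (2 * t))) := by
  have hπ := Real.pi_pos
  have hc : 0 < π^2*t/(2*M^2) := by positivity
  have hsqrt : 0 < Real.sqrt (2*π*t) := Real.sqrt_pos.2 (by positivity)
  -- geometric-dominated ℕ Gaussian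
  have hgeom : Summable fun n : ℕ => Real.exp (-(π^2*t/(2*M^2)) * ((n:ℝ)+1/2)^2) := by
    refine Summable.of_nonneg_of_le (fun n => (Real.exp_pos _).le) (fun n => ?_)
      (summable_geometric_of_lt_one (Real.exp_pos _).le
        (Real.exp_lt_one_iff.2 (neg_lt_zero.2 hc)))
    rw [← Real.exp_nat_mul]
    apply Real.exp_le_exp.2
    nlinarith [sq_nonneg ((n:ℝ))]
  -- Gaussian ℤ summabilities
  have hs1 : Summable fun n : ℤ => Real.exp (-(y - x - 2*(n:ℝ)*M)^2/(2*t)) :=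
    shifted_gauss_summable ht hM (y - x)
  have hs2 : Summable fun n : ℤ => Real.exp (-(y + x + 2*(n:ℝ)*M)^2/(2*t)) := by
    refine ((shifted_gauss_summable ht hM (y + x)).comp_injective neg_injective).congr
      fun n => ?_
    simp only [Function.comp_apply]
    congr 1
    push_cast
    ring
  have habs : ∀ n : ℤ, |(-1:ℝ)^n| = 1 := by
    intro n
    rcases Int.even_or_odd n with h | h
    · rw [h.neg_one_zpow, abs_one]
    · rw [h.neg_one_zpow, abs_neg, abs_one]
  have hsg1 : Summable fun n : ℤ => (-1:ℝ)^n * Real.exp (-(y - x - 2*(n:ℝ)*M)^2/(2*t)) := by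
    apply Summable.of_norm
    refine hs1.congr fun n => ?_
    simp [abs_mul, habs, abs_of_pos (Real.exp_pos _)]
  have hsg2 : Summable fun n : ℤ => (-1:ℝ)^n * Real.exp (-(y + x + 2*(n:ℝ)*M)^2/(2*t)) := by
    apply Summable.of_norm
    refine hs2.congr fun n => ?_
    simp [abs_mul, habs, abs_of_pos (Real.exp_pos _)]
  refine ⟨?_, ?_, ?_⟩
  · -- first summability
    refine Summable.of_nonneg_of_le (fun n => abs_nonneg _) (fun n => ?_)
      (hgeom.mul_left (2/M))
    have h1 := Real.abs_cos_le_one (((n : ℝ) + 1 - 1 / 2) * π * x / M)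
    have h2 := Real.abs_cos_le_one (((n : ℝ) + 1 - 1 / 2) * π * y / M)
    have he : Real.exp (-((n : ℝ) + 1 - 1 / 2) ^ 2 * π ^ 2 * t / (2 * M ^ 2))
        = Real.exp (-(π^2*t/(2*M^2)) * ((n:ℝ)+1/2)^2) := by
      congr 1; ring
    calc |(2 / M) * Real.cos (((n : ℝ) + 1 - 1 / 2) * π * x / M) *
            Real.cos (((n : ℝ) + 1 - 1 / 2) * π * y / M) *
            Real.exp (-((n : ℝ) + 1 - 1 / 2) ^ 2 * π ^ 2 * t / (2 * M ^ 2))|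
        = (2/M) * |Real.cos (((n : ℝ) + 1 - 1 / 2) * π * x / M)| *
            |Real.cos (((n : ℝ) + 1 - 1 / 2) * π * y / M)| *
            Real.exp (-((n : ℝ) + 1 - 1 / 2) ^ 2 * π ^ 2 * t / (2 * M ^ 2)) := by
          rw [abs_mul, abs_mul, abs_mul, abs_of_pos (by positivity : (0:ℝ) < 2/M),
            Real.abs_exp]
      _ ≤ (2/M) * 1 * 1 * Real.exp (-((n : ℝ) + 1 - 1 / 2) ^ 2 * π ^ 2 * t / (2 * M ^ 2)) := by
          gcongr
      _ = 2/M * Real.exp (-(π^2*t/(2*M^2)) * ((n:ℝ)+1/2)^2) := by rw [he]; ring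
  · -- second summability
    refine ((hs1.add hs2).mul_left (1/Real.sqrt (2*π*t))).congr fun n => ?_
    rw [abs_mul, abs_div, habs]
    rw [abs_of_pos (by positivity : (0:ℝ) < Real.exp (-(y - x - 2*(n:ℝ)*M)^2/(2*t))
        + Real.exp (-(y + x + 2*(n:ℝ)*M)^2/(2*t)))]
    rw [abs_of_pos hsqrt]
  · -- the equality
    have hprod : ∀ a b : ℝ, Real.cos a * Real.cos b = (Real.cos (a-b) + Real.cos (a+b))/2 :=
      fun a b => by rw [Real.cos_sub, Real.cos_add]; ring
    set f : ℝ → ℤ → ℝ := fun u n =>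
      Real.exp (-(π^2*t/(2*M^2)) * ((n:ℝ)+1/2)^2) * Real.cos (π*u/M*((n:ℝ)+1/2)) with hf_def
    have hfabs : ∀ (u : ℝ) (n : ℤ), |f u n| ≤ Real.exp (-(π^2*t/(2*M^2)) * ((n:ℝ)+1/2)^2) := by
      intro u n
      rw [hf_def]
      simp only
      rw [abs_mul, Real.abs_exp]
      calc Real.exp (-(π^2*t/(2*M^2)) * ((n:ℝ)+1/2)^2) * |Real.cos (π*u/M*((n:ℝ)+1/2))|
          ≤ Real.exp (-(π^2*t/(2*M^2)) * ((n:ℝ)+1/2)^2) * 1 := by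
            gcongr
            exact Real.abs_cos_le_one _
        _ = _ := mul_one _
    have hNsum : ∀ u : ℝ, Summable fun n : ℕ => f u (n:ℤ) := by
      intro u
      apply Summable.of_norm
      refine Summable.of_nonneg_of_le (fun n => abs_nonneg _) (fun n => ?_) hgeom
      calc |f u (n:ℤ)| ≤ Real.exp (-(π^2*t/(2*M^2)) * (((n:ℤ):ℝ)+1/2)^2) := hfabs u n
        _ = Real.exp (-(π^2*t/(2*M^2)) * ((n:ℝ)+1/2)^2) := by push_cast; ring_nf
    have hZsum : ∀ u : ℝ, Summable fun n : ℤ => f u n := by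
      intro u
      apply Summable.of_norm
      exact Summable.of_nonneg_of_le (fun n => abs_nonneg _) (fun n => hfabs u n)
        (half_gauss_summable hc)
    have hsymm : ∀ (u : ℝ) (n : ℕ), f u (-((n:ℤ) + 1)) = f u (n:ℤ) := by
      intro u n
      rw [hf_def]
      simp only
      rw [show ((-((n:ℤ)+1) : ℤ):ℝ) + 1/2 = -((((n:ℤ)):ℝ) + 1/2) by push_cast; ring,
        neg_sq, mul_neg, Real.cos_neg]
    have hfoldN : ∀ u : ℝ, ∑' n : ℕ, f u (n:ℤ) = (1/2) * ∑' n : ℤ, f u n := by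
      intro u
      have h2 : Summable fun n : ℕ => f u (-((n:ℤ)+1)) :=
        (hNsum u).congr fun n => (hsymm u n).symm
      rw [tsum_of_nat_of_neg_add_one (hNsum u) h2, tsum_congr (hsymm u)]
      ring
    have hterm : ∀ n : ℕ, (2 / M) * Real.cos (((n : ℝ) + 1 - 1 / 2) * π * x / M) *
          Real.cos (((n : ℝ) + 1 - 1 / 2) * π * y / M) *
          Real.exp (-((n : ℝ) + 1 - 1 / 2) ^ 2 * π ^ 2 * t / (2 * M ^ 2))
        = (1/M) * (f (x-y) (n:ℤ) + f (x+y) (n:ℤ)) := by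
      intro n
      rw [hf_def]
      simp only
      rw [show (2 / M) * Real.cos (((n : ℝ) + 1 - 1 / 2) * π * x / M) *
            Real.cos (((n : ℝ) + 1 - 1 / 2) * π * y / M) *
            Real.exp (-((n : ℝ) + 1 - 1 / 2) ^ 2 * π ^ 2 * t / (2 * M ^ 2))
          = (2 / M) * (Real.cos (((n : ℝ) + 1 - 1 / 2) * π * x / M) *
            Real.cos (((n : ℝ) + 1 - 1 / 2) * π * y / M)) *
            Real.exp (-((n : ℝ) + 1 - 1 / 2) ^ 2 * π ^ 2 * t / (2 * M ^ 2)) by ring, hprod]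
      rw [show ((n : ℝ) + 1 - 1 / 2) * π * x / M - ((n : ℝ) + 1 - 1 / 2) * π * y / M
          = π*(x-y)/M*((((n:ℤ)):ℝ)+1/2) by push_cast; ring,
        show ((n : ℝ) + 1 - 1 / 2) * π * x / M + ((n : ℝ) + 1 - 1 / 2) * π * y / M
          = π*(x+y)/M*((((n:ℤ)):ℝ)+1/2) by push_cast; ring,
        show -((n : ℝ) + 1 - 1 / 2) ^ 2 * π ^ 2 * t / (2 * M ^ 2)
          = -(π^2*t/(2*M^2)) * (((((n:ℤ)):ℝ))+1/2)^2 by push_cast; ring]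
      ring
    have hneg : ∀ n : ℤ, ((-1:ℝ))^(-n) = (-1:ℝ)^n := fun n => by
      rw [zpow_neg, ← inv_zpow, inv_neg, inv_one]
    have hrei1 : (∑' n : ℤ, (-1:ℝ)^n * Real.exp (-(x-y-2*(n:ℝ)*M)^2/(2*t)))
        = ∑' n : ℤ, (-1:ℝ)^n * Real.exp (-(y-x-2*(n:ℝ)*M)^2/(2*t)) := by
      rw [← (Equiv.neg ℤ).tsum_eq
        (fun n : ℤ => (-1:ℝ)^n * Real.exp (-(x-y-2*(n:ℝ)*M)^2/(2*t)))]
      refine tsum_congr fun n => ?_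
      simp only [Equiv.neg_apply]
      rw [hneg]
      congr 2
      push_cast
      ring
    have hrei2 : (∑' n : ℤ, (-1:ℝ)^n * Real.exp (-(x+y-2*(n:ℝ)*M)^2/(2*t)))
        = ∑' n : ℤ, (-1:ℝ)^n * Real.exp (-(y+x+2*(n:ℝ)*M)^2/(2*t)) := by
      rw [← (Equiv.neg ℤ).tsum_eq
        (fun n : ℤ => (-1:ℝ)^n * Real.exp (-(x+y-2*(n:ℝ)*M)^2/(2*t)))]
      refine tsum_congr fun n => ?_
      simp only [Equiv.neg_apply]
      rw [hneg]
      congr 2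
      push_cast
      ring
    have hR : (∑' n : ℤ, ((-1 : ℝ) ^ n / Real.sqrt (2 * π * t)) *
          (Real.exp (-(y - x - 2 * (n : ℝ) * M) ^ 2 / (2 * t)) +
            Real.exp (-(y + x + 2 * (n : ℝ) * M) ^ 2 / (2 * t))))
        = 1/Real.sqrt (2*π*t) * (∑' n : ℤ, (-1:ℝ)^n * Real.exp (-(y-x-2*(n:ℝ)*M)^2/(2*t)))
          + 1/Real.sqrt (2*π*t) * (∑' n : ℤ, (-1:ℝ)^n * Real.exp (-(y+x+2*(n:ℝ)*M)^2/(2*t))) := by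
      rw [show (fun n : ℤ => ((-1 : ℝ) ^ n / Real.sqrt (2 * π * t)) *
            (Real.exp (-(y - x - 2 * (n : ℝ) * M) ^ 2 / (2 * t)) +
              Real.exp (-(y + x + 2 * (n : ℝ) * M) ^ 2 / (2 * t))))
          = fun n : ℤ => 1/Real.sqrt (2*π*t) * ((-1:ℝ)^n * Real.exp (-(y-x-2*(n:ℝ)*M)^2/(2*t)))
            + 1/Real.sqrt (2*π*t) * ((-1:ℝ)^n * Real.exp (-(y+x+2*(n:ℝ)*M)^2/(2*t)))
          from funext fun n => by ring]
      rw [Summable.tsum_add (hsg1.mul_left _) (hsg2.mul_left _), tsum_mul_left, tsum_mul_left]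
    rw [hR]
    calc (∑' n : ℕ, (2 / M) * Real.cos (((n : ℝ) + 1 - 1 / 2) * π * x / M) *
            Real.cos (((n : ℝ) + 1 - 1 / 2) * π * y / M) *
            Real.exp (-((n : ℝ) + 1 - 1 / 2) ^ 2 * π ^ 2 * t / (2 * M ^ 2)))
        = ∑' n : ℕ, (1/M) * (f (x-y) (n:ℤ) + f (x+y) (n:ℤ)) := tsum_congr hterm
      _ = (1/M) * ((∑' n : ℕ, f (x-y) (n:ℤ)) + ∑' n : ℕ, f (x+y) (n:ℤ)) := by
          rw [tsum_mul_left, Summable.tsum_add (hNsum (x-y)) (hNsum (x+y))]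
      _ = (1/M) * ((1/2) * ∑' n : ℤ, f (x-y) n + (1/2) * ∑' n : ℤ, f (x+y) n) := by
          rw [hfoldN (x-y), hfoldN (x+y)]
      _ = (1/M) * ((1/2) * (2*M/Real.sqrt (2*π*t)
              * ∑' n : ℤ, ((-1:ℝ)^n * Real.exp (-((x-y)-2*(n:ℝ)*M)^2/(2*t))))
            + (1/2) * (2*M/Real.sqrt (2*π*t)
              * ∑' n : ℤ, ((-1:ℝ)^n * Real.exp (-((x+y)-2*(n:ℝ)*M)^2/(2*t))))) := by
          rw [hf_def]
          rw [real_key t M ht hM (x-y), real_key t M ht hM (x+y)]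
      _ = 1/Real.sqrt (2*π*t) * (∑' n : ℤ, (-1:ℝ)^n * Real.exp (-(x-y-2*(n:ℝ)*M)^2/(2*t)))
            + 1/Real.sqrt (2*π*t) * (∑' n : ℤ, (-1:ℝ)^n * Real.exp (-(x+y-2*(n:ℝ)*M)^2/(2*t))) := by
          have hM0 : M ≠ 0 := hM.ne'
          have hs0 : Real.sqrt (2*π*t) ≠ 0 := hsqrt.ne'
          field_simp
      _ = 1/Real.sqrt (2*π*t) * (∑' n : ℤ, (-1:ℝ)^n * Real.exp (-(y-x-2*(n:ℝ)*M)^2/(2*t)))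
            + 1/Real.sqrt (2*π*t) * (∑' n : ℤ, (-1:ℝ)^n * Real.exp (-(y+x+2*(n:ℝ)*M)^2/(2*t))) := by
          rw [hrei1, hrei2]
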